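/- Let f : ℝ^n → ℝ be differentiable with gradient ∇f and convex, with a global minimizer x*; let x⁰ ∈ ℝ^n, μ > 0, R = ‖x⁰ − x*‖, let α ≥ 0, and let g̃ satisfy the relative noise condition with parameter α. Define f_μ(x) = f(x) + (μ/2)‖x − x⁰‖², so ∇f_μ(x) = ∇f(x) + μ(x − x⁰), and define g̃_μ(x) = g̃(x) + μ(x − x⁰). Then for every x: ‖g̃_μ(x) − ∇f_μ(x)‖ ≤ 2α·‖∇f_μ(x)‖ + α·μ·R. -/
import Mathlib


open scoped InnerProductSpace

/-- The regularized gradient estimate satisfies a composite noise condition. -/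
theorem reg_noise {n : ℕ} (f : EuclideanSpace ℝ (Fin n) → ℝ)
    (f' g : EuclideanSpace ℝ (Fin n) → EuclideanSpace ℝ (Fin n))
    (hgrad : ∀ x, HasGradientAt f (f' x) x)
    (hconv : ∀ x y : EuclideanSpace ℝ (Fin n), f x + ⟪f' x, y - x⟫_ℝ ≤ f y)
    (xstar : EuclideanSpace ℝ (Fin n)) (hmin : ∀ y, f xstar ≤ f y)
    (x0 : EuclideanSpace ℝ (Fin n)) (μ : ℝ) (hμ : 0 < μ)
    (R : ℝ) (hR : R = ‖x0 - xstar‖)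
    (α : ℝ) (hα : 0 ≤ α)
    (hnoise : ∀ x, ‖g x - f' x‖ ≤ α * ‖f' x‖) :
    ∀ x : EuclideanSpace ℝ (Fin n),
      ‖(g x + μ • (x - x0)) - (f' x + μ • (x - x0))‖ ≤
        2 * α * ‖f' x + μ • (x - x0)‖ + α * μ * R := by
  intro x
  have hsimp : (g x + μ • (x - x0)) - (f' x + μ • (x - x0)) = g x - f' x := by
    abel
  rw [hsimp]
  -- convexity at minimizer: ⟪f' x, x - xstar⟫ ≥ 0
  have h1 : (0 : ℝ) ≤ ⟪f' x, x - xstar⟫_ℝ := by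
    have hc := hconv x xstar
    have hm := hmin x
    have : x - xstar = -(xstar - x) := by abel
    rw [this, inner_neg_right]
    linarith
  -- key: ‖f' x‖ ≤ ‖f' x + μ • (x - x0)‖ + μ * R
  have hdec : ⟪f' x, x - x0⟫_ℝ = ⟪f' x, x - xstar⟫_ℝ + ⟪f' x, xstar - x0⟫_ℝ := by
    rw [← inner_add_right]
    congr 1
    abel
  have hsq : ‖f' x‖ ^ 2 = ⟪f' x, f' x + μ • (x - x0)⟫_ℝ - μ * ⟪f' x, x - x0⟫_ℝ := by
    rw [inner_add_right, real_inner_smul_right, real_inner_self_eq_norm_sq]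
    ring
  have hc1 : ⟪f' x, f' x + μ • (x - x0)⟫_ℝ ≤ ‖f' x‖ * ‖f' x + μ • (x - x0)‖ :=
    real_inner_le_norm _ _
  have hc2 : -⟪f' x, xstar - x0⟫_ℝ ≤ ‖f' x‖ * R := by
    have := real_inner_le_norm (f' x) (x0 - xstar)
    have hx : x0 - xstar = -(xstar - x0) := by abel
    rw [hx, inner_neg_right, norm_neg, norm_sub_rev] at this
    rw [hR]
    linarith
  have hkey : ‖f' x‖ ≤ ‖f' x + μ • (x - x0)‖ + μ * R := by
    rcases eq_or_lt_of_le (norm_nonneg (f' x)) with h0 | h0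
    · have hG : (0:ℝ) ≤ ‖f' x + μ • (x - x0)‖ := norm_nonneg _
      have hRn : (0:ℝ) ≤ R := by rw [hR]; exact norm_nonneg _
      nlinarith
    · have hineq : ‖f' x‖ ^ 2 ≤ ‖f' x‖ * ‖f' x + μ • (x - x0)‖ + μ * (‖f' x‖ * R) := by
        rw [hsq, hdec]
        nlinarith
      nlinarith
  have hn := hnoise x
  have hG : (0:ℝ) ≤ ‖f' x + μ • (x - x0)‖ := norm_nonneg _
  nlinarith
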